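/- If G is an inverse semi-rational finite group whose order is divisible by 7, then the order of G is divisible by 3. -/
import Mathlib


/-- An element `x` of a group is inverse semi-rational if for every integer `j`
coprime to the order of `x`, `x ^ j` is conjugate to `x` or to `x⁻¹`. -/
def IsInvSemiRationalElem {G : Type*} [Group G] (x : G) : Prop :=
  ∀ j : ℤ, Int.gcd j (orderOf x) = 1 → IsConj (x ^ j) x ∨ IsConj (x ^ j) x⁻¹

/-- A group is inverse semi-rational if all its elements are. -/
def IsInvSemiRational (G : Type*) [Group G] : Prop :=
  ∀ x : G, IsInvSemiRationalElem x

private lemma conj_pow_iter {G : Type*} [Group G] (g x : G) (k : ℕ)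
    (hg : g * x * g⁻¹ = x ^ k) : ∀ n : ℕ, g ^ n * x * (g ^ n)⁻¹ = x ^ (k ^ n) := by
  intro n
  induction n with
  | zero => simp
  | succ n ih =>
    have : g ^ (n + 1) * x * (g ^ (n + 1))⁻¹ = g * (g ^ n * x * (g ^ n)⁻¹) * g⁻¹ := by
      rw [pow_succ']; group
    rw [this, ih, ← conj_pow, hg, ← pow_mul, pow_succ']

private lemma three_dvd_of_pow {n : ℕ} (hn : (4 : ZMod 7) ^ n = 1) : 3 ∣ n := by
  have ho : orderOf (4 : ZMod 7) = 3 :=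
    orderOf_eq_prime (by decide) (by decide)
  have := orderOf_dvd_of_pow_eq_one hn
  rwa [ho] at this

theorem stmt_6 {G : Type*} [Group G] [Finite G] (h : IsInvSemiRational G)
    (h7 : 7 ∣ Nat.card G) : 3 ∣ Nat.card G := by
  haveI : Fact (Nat.Prime 7) := ⟨by norm_num⟩
  obtain ⟨x, hx⟩ := exists_prime_orderOf_dvd_card' 7 h7
  -- get g with g x g⁻¹ = x^2 or x^5
  have key : ∃ (g : G) (k : ℕ), (k = 2 ∨ k = 5) ∧ g * x * g⁻¹ = x ^ k := by
    have h4 : (x ^ 2)⁻¹ = x ^ 5 := by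
      have h7' : x ^ 7 = 1 := by rw [← hx]; exact pow_orderOf_eq_one x
      rw [eq_comm, eq_inv_iff_mul_eq_one, ← pow_add]
      norm_num [h7']
    rcases h x 2 (by rw [hx]; decide) with hc | hc <;> rw [isConj_iff] at hc <;>
        obtain ⟨c, hc⟩ := hc <;>
      rw [show ((2 : ℤ)) = ((2 : ℕ) : ℤ) by norm_num, zpow_natCast] at hc
    · exact ⟨c⁻¹, 2, Or.inl rfl, by nth_rewrite 1 [← hc]; group⟩
    · refine ⟨c⁻¹, 5, Or.inr rfl, ?_⟩
      have hinv : (c * x ^ 2 * c⁻¹)⁻¹ = x := by rw [hc, inv_inv]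
      rw [← h4]
      nth_rewrite 1 [← hinv]
      group
  obtain ⟨g, k, hk, hg⟩ := key
  set n := orderOf g with hn
  have hiter := conj_pow_iter g x k hg n
  rw [pow_orderOf_eq_one g] at hiter
  simp only [one_mul, inv_one, mul_one] at hiter
  -- x = x ^ (k ^ n), so k^n ≡ 1 mod 7
  have hmod : k ^ n ≡ 1 [MOD 7] := by
    have : x ^ (k ^ n) = x ^ 1 := by rw [← hiter, pow_one]
    have := (pow_eq_pow_iff_modEq).mp this
    rwa [hx] at this
  have hz : ((k : ZMod 7)) ^ n = 1 := by
    have := (ZMod.natCast_eq_natCast_iff _ _ _).mpr hmod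
    push_cast at this
    simpa using this
  have h4 : (4 : ZMod 7) ^ n = 1 := by
    have hk2 : ((k : ZMod 7)) ^ 2 = 4 := by rcases hk with rfl | rfl <;> rfl
    calc (4 : ZMod 7) ^ n = ((k : ZMod 7) ^ 2) ^ n := by rw [hk2]
      _ = ((k : ZMod 7) ^ n) ^ 2 := by ring
      _ = 1 := by rw [hz]; ring
  exact dvd_trans (three_dvd_of_pow h4) (orderOf_dvd_natCard g)
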